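/- Fix integers d ≥ 2, b ≥ 3, a set A ⊆ {0,...,b−1}, and 1 ≤ m ≤ d, and let N = Σ_{i=0}^{m−1} C(d−1, i)·|A|^i·(b−|A|)^{d−i−1}. Then the number of vertices of the complete-lines subgraph C_k of Γ_k(d,b,A,m) satisfies |C_k| ≍ (N·b)^k: there exist constants c, C > 0 (depending on d, b, A, m but not on k) with c·(Nb)^k ≤ |C_k| ≤ C·(Nb)^k for all k. -/

import Mathlib

open scoped Classical

/-- Reachability within the subgraph of `X` induced on a vertex set `s`. -/
def SimpleGraph.ReachIn {V : Type*} (X : SimpleGraph V) (s : Set V) (v w : V) : Prop :=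
  ∃ (hv : v ∈ s) (hw : w ∈ s), (X.induce s).Reachable ⟨v, hv⟩ ⟨w, hw⟩

/-- The vertex set of the connected component of `v` in the subgraph of `X` induced on `s`
(empty if `v ∉ s`). -/
def SimpleGraph.compIn {V : Type*} (X : SimpleGraph V) (s : Set V) (v : V) : Set V :=
  {w | X.ReachIn s v w}

/-- `T` is a vertex set witnessing `cut¹ᐟ²` for the subgraph of `X` induced on the finite
vertex set `G`: after removing `T` from `G`, every connected component has at most
`|G|/2` vertices. -/
def IsHalfCutSet {V : Type*} (X : SimpleGraph V) (G T : Finset V) : Prop :=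
  T ⊆ G ∧ ∀ v : V, 2 * (X.compIn (↑(G \ T)) v).ncard ≤ G.card

/-- `cut¹ᐟ²` of the subgraph of `X` induced on the finite vertex set `G`: the least size of
a vertex set whose removal leaves all connected components of size at most `|G|/2`. -/
noncomputable def cutHalf {V : Type*} (X : SimpleGraph V) (G : Finset V) : ℕ :=
  sInf {t | ∃ T : Finset V, IsHalfCutSet X G T ∧ T.card = t}

/-- The `1/2`-separation profile of `X`, over finite subgraphs with vertex set inside `W`. -/
noncomputable def sepHalf {V : Type*} (X : SimpleGraph V) (W : Set V) (n : ℕ) : ℕ :=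
  sSup {c | ∃ G : Finset V, ↑G ⊆ W ∧ G.card ≤ n ∧ c = cutHalf X G}

/-- The `i`-th digit of `x` in base `b`. -/
def digit (b i x : ℕ) : ℕ := x / b ^ i % b

/-- Membership in the vertex set `V_k` of `Γ_k(d,b,A,m)`: all coordinates lie in `[0, b^k)`
and at every digit position `j < k`, at most `m` coordinates have their `j`-th base-`b`
digit in `A`. -/
def GenMem (d b : ℕ) (A : Finset ℕ) (m k : ℕ) (x : Fin d → ℕ) : Prop :=
  (∀ i, x i < b ^ k) ∧
    ∀ j < k, (Finset.univ.filter fun i : Fin d => digit b j (x i) ∈ A).card ≤ m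

/-- The vertex set of `S(d,b,A,m) = ⋃ₖ Γ_k(d,b,A,m)`. -/
def GenS (d b : ℕ) (A : Finset ℕ) (m : ℕ) : Set (Fin d → ℕ) :=
  {x | ∃ k, GenMem d b A m k x}

/-- The infinite graph `S(d,b,A,m)`, with edges between valid points at `ℓ¹`-distance 1. -/
def GenGraph (d b : ℕ) (A : Finset ℕ) (m : ℕ) : SimpleGraph (Fin d → ℕ) where
  Adj x y := x ∈ GenS d b A m ∧ y ∈ GenS d b A m ∧ (∑ i, |(x i : ℤ) - y i|) = 1
  symm := by
    constructor
    rintro x y ⟨hx, hy, h⟩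
    refine ⟨hy, hx, ?_⟩
    rw [← h]
    exact Finset.sum_congr rfl fun i _ => abs_sub_comm _ _
  loopless := by constructor; rintro x ⟨-, -, h⟩; simp at h

/-- The vertex set of `Γ_k(d,b,A,m)`. -/
noncomputable def GenGammaV (d b : ℕ) (A : Finset ℕ) (m k : ℕ) : Finset (Fin d → ℕ) :=
  (Fintype.piFinset fun _ : Fin d => Finset.range (b ^ k)).filter (GenMem d b A m k)

/-- The full line of length `b^k` through `x` in coordinate direction `i` is entirely
contained in `Γ_k(d,b,A,m)`. -/
def GenLineComplete (d b : ℕ) (A : Finset ℕ) (m k : ℕ) (i : Fin d) (x : Fin d → ℕ) : Prop :=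
  ∀ t < b ^ k, GenMem d b A m k (Function.update x i t)

/-- The set of points of the full line of length `b^k` through `x` in direction `i`. -/
def GenLineSet (d b k : ℕ) (i : Fin d) (x : Fin d → ℕ) : Set (Fin d → ℕ) :=
  {y | ∃ t < b ^ k, y = Function.update x i t}

/-- The vertex set of the complete-lines subgraph `C_k` of `Γ_k(d,b,A,m)`. -/
noncomputable def GenCkV (d b : ℕ) (A : Finset ℕ) (m k : ℕ) : Finset (Fin d → ℕ) :=
  (GenGammaV d b A m k).filter fun x => ∃ i : Fin d, GenLineComplete d b A m k i x

section CkAux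
open Finset



lemma digit_add_pow_mul {b : ℕ} (hb : 0 < b) {j k : ℕ} (hj : j < k) (y z : ℕ) :
    digit b j (y + b ^ k * z) = digit b j y := by
  unfold digit
  have e : y + b ^ k * z = y + b ^ j * (b ^ (k - j) * z) := by
    rw [← mul_assoc, ← pow_add]; congr 3; omega
  rw [e, Nat.add_mul_div_left _ _ (pow_pos hb j)]
  have e2 : b ^ (k - j) * z = b * (b ^ (k - j - 1) * z) := by
    rw [← mul_assoc, ← pow_succ']
    congr 2
    omega
  rw [e2, Nat.add_mul_mod_self_left]

lemma digit_mod_pow {b : ℕ} (hb : 0 < b) {j k : ℕ} (hj : j < k) (x : ℕ) :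
    digit b j (x % b ^ k) = digit b j x := by
  conv_rhs => rw [← Nat.mod_add_div x (b ^ k)]
  rw [digit_add_pow_mul hb hj]

lemma digit_top {b : ℕ} (hb : 0 < b) {k y z : ℕ} (hy : y < b ^ k) (hz : z < b) :
    digit b k (y + b ^ k * z) = z := by
  unfold digit
  rw [Nat.add_mul_div_left _ _ (pow_pos hb k), Nat.div_eq_of_lt hy, zero_add,
    Nat.mod_eq_of_lt hz]

/-- The number `a + a·b + ⋯ + a·b^{k-1}`, all of whose first `k` digits equal `a`. -/
def allAux (a b : ℕ) : ℕ → ℕ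
  | 0 => 0
  | k + 1 => a + b * allAux a b k

lemma allAux_lt {a b : ℕ} (ha : a < b) : ∀ k, allAux a b k < b ^ k
  | 0 => by simp [allAux]
  | k + 1 => by
    have h := allAux_lt ha k
    have h2 : b * (allAux a b k + 1) ≤ b * b ^ k := Nat.mul_le_mul_left _ h
    have : b ^ (k + 1) = b ^ k * b := pow_succ b k
    simp only [allAux]
    nlinarith
  
lemma digit_allAux {a b : ℕ} (ha : a < b) : ∀ k j, j < k → digit b j (allAux a b k) = a
  | k + 1, 0, _ => by
    simp only [allAux, digit, pow_zero, Nat.div_one, Nat.add_mul_mod_self_left,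
      Nat.mod_eq_of_lt ha]
  | k + 1, j + 1, hj => by
    have hb : 0 < b := lt_of_le_of_lt (Nat.zero_le _) ha
    have e : allAux a b (k + 1) = a + b * allAux a b k := rfl
    rw [digit, e, pow_succ', ← Nat.div_div_eq_div_mul, Nat.add_mul_div_left _ _ hb,
      Nat.div_eq_of_lt ha, zero_add]
    exact digit_allAux ha k j (by omega)

end CkAux

/-- `N`, the number of single-column digit configurations of `d-1` coordinates with at
most `m-1` digits in `A`. -/
def genN (d b : ℕ) (A : Finset ℕ) (m : ℕ) : ℕ :=
  ∑ i ∈ Finset.range m, (d - 1).choose i * A.card ^ i * (b - A.card) ^ (d - i - 1)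

section CkAux2
open Finset
noncomputable def genCol (d b : ℕ) (A : Finset ℕ) (m : ℕ) (i₀ : Fin d) : Finset (Fin d → ℕ) :=
  (Fintype.piFinset fun _ : Fin d => Finset.range b).filter
    fun c => (Finset.univ.filter fun i => i ≠ i₀ ∧ c i ∈ A).card < m

lemma card_genCol (d b m : ℕ) (A : Finset ℕ) (hA : A ⊆ Finset.range b) (i₀ : Fin d) :
    (genCol d b A m i₀).card = genN d b A m * b := by
  classical
  set t : Finset (Finset (Fin d)) :=
    ((Finset.univ.erase i₀).powerset).filter fun s => s.card < m with ht
  have hmaps : ∀ c ∈ genCol d b A m i₀,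
      (Finset.univ.filter fun i => i ≠ i₀ ∧ c i ∈ A) ∈ t := by
    intro c hc
    rw [ht, mem_filter, mem_powerset]
    refine ⟨fun i hi => ?_, (mem_filter.mp hc).2⟩
    rw [mem_filter] at hi
    exact mem_erase.mpr ⟨hi.2.1, mem_univ i⟩
  rw [card_eq_sum_card_fiberwise hmaps]
  -- each fiber is a product set
  have hfiber : ∀ s ∈ t,
      ((genCol d b A m i₀).filter
        fun c => (Finset.univ.filter fun i => i ≠ i₀ ∧ c i ∈ A) = s).card
      = A.card ^ s.card * (b * (b - A.card) ^ (d - s.card - 1)) := by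
    intro s hs
    rw [ht, mem_filter, mem_powerset] at hs
    obtain ⟨hsub, hcard⟩ := hs
    have key : ((genCol d b A m i₀).filter
        fun c => (Finset.univ.filter fun i => i ≠ i₀ ∧ c i ∈ A) = s)
        = Fintype.piFinset (fun i : Fin d =>
            if i ∈ s then A else if i = i₀ then Finset.range b else Finset.range b \ A) := by
      ext c
      simp only [mem_filter, Fintype.mem_piFinset, genCol]
      constructor
      · rintro ⟨⟨hmem, -⟩, hset⟩ i
        by_cases his : i ∈ s
        · simp only [his, if_pos]
          rw [← hset] at his
          exact (mem_filter.mp his).2.2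
        · simp only [his, if_neg, if_false]
          by_cases hii : i = i₀
          · rw [if_pos hii]
            subst hii
            exact hmem i
          · simp only [hii, if_neg, if_false, mem_sdiff]
            refine ⟨hmem i, fun hia => his ?_⟩
            rw [← hset, mem_filter]
            exact ⟨mem_univ i, hii, hia⟩
      · intro h
        have hrange : ∀ i, c i ∈ Finset.range b := by
          intro i
          have := h i
          split_ifs at this with h1 h2
          · exact hA this
          · exact this
          · exact (mem_sdiff.mp this).1
        have hset : (Finset.univ.filter fun i => i ≠ i₀ ∧ c i ∈ A) = s := by
          ext i
          rw [mem_filter]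
          constructor
          · rintro ⟨-, hii, hia⟩
            by_contra his
            have := h i
            simp only [his, hii, if_neg, if_false] at this
            exact (mem_sdiff.mp this).2 hia
          · intro his
            have := h i
            simp only [his, if_pos] at this
            exact ⟨mem_univ i, (mem_erase.mp (hsub his)).1, this⟩
        refine ⟨⟨hrange, ?_⟩, hset⟩
        rw [hset]; exact hcard
    rw [key, Fintype.card_piFinset]
    have hi₀s : i₀ ∉ s := fun h => (mem_erase.mp (hsub h)).1 rfl
    have step1 : ∀ i ∈ s,
        ((if i ∈ s then A else if i = i₀ then Finset.range b else Finset.range b \ A).card)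
        = A.card := fun i hi => by simp [hi]
    rw [← Finset.prod_sdiff (subset_univ s), Finset.prod_congr rfl step1, prod_const]
    have hi₀mem : i₀ ∈ Finset.univ \ s := mem_sdiff.mpr ⟨mem_univ _, hi₀s⟩
    rw [← Finset.mul_prod_erase _ _ hi₀mem]
    have step2 : ∀ i ∈ (Finset.univ \ s).erase i₀,
        ((if i ∈ s then A else if i = i₀ then Finset.range b else Finset.range b \ A).card)
        = b - A.card := by
      intro i hi
      obtain ⟨hii, hiu⟩ := mem_erase.mp hi
      have his := (mem_sdiff.mp hiu).2
      simp only [his, hii, if_neg, if_false]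
      rw [Finset.card_sdiff_of_subset hA, Finset.card_range]
    rw [Finset.prod_congr rfl step2, prod_const, if_neg hi₀s, if_pos rfl, Finset.card_range]
    have hcard2 : ((Finset.univ \ s).erase i₀).card = d - s.card - 1 := by
      rw [Finset.card_erase_of_mem hi₀mem, Finset.card_sdiff_of_subset (subset_univ s)]
      simp
    rw [hcard2]
    ring
  rw [Finset.sum_congr rfl hfiber]
  -- now sum over t, fiberwise by card
  have hmaps2 : ∀ s ∈ t, s.card ∈ Finset.range m := by
    intro s hs
    rw [ht, mem_filter] at hs
    exact mem_range.mpr hs.2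
  rw [← Finset.sum_fiberwise_of_maps_to hmaps2
    (fun s => A.card ^ s.card * (b * (b - A.card) ^ (d - s.card - 1)))]
  have hfib2 : ∀ j ∈ Finset.range m,
      (t.filter fun s => s.card = j) = (Finset.univ.erase i₀).powersetCard j := by
    intro j hj
    rw [mem_range] at hj
    ext s
    rw [mem_filter, ht, mem_filter, mem_powerset, Finset.mem_powersetCard]
    constructor
    · rintro ⟨⟨h1, -⟩, h3⟩; exact ⟨h1, h3⟩
    · rintro ⟨h1, h2⟩; exact ⟨⟨h1, h2 ▸ hj⟩, h2⟩
  rw [genN, Finset.sum_mul]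
  refine Finset.sum_congr rfl fun j hj => ?_
  rw [hfib2 j hj]
  rw [Finset.sum_congr rfl (fun s hs => by
    rw [(Finset.mem_powersetCard.mp hs).2]), Finset.sum_const, Finset.card_powersetCard,
    Finset.card_erase_of_mem (mem_univ _), Finset.card_univ, Fintype.card_fin]
  ring


/-- For a fixed direction `i₀`: points all of whose coordinates are `< b^k` and such that
every digit column has fewer than `m` coordinates other than `i₀` with digit in `A`. -/
noncomputable def genF (d b : ℕ) (A : Finset ℕ) (m k : ℕ) (i₀ : Fin d) :
    Finset (Fin d → ℕ) :=
  (Fintype.piFinset fun _ : Fin d => Finset.range (b ^ k)).filter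
    fun x => ∀ j < k, (Finset.univ.filter fun i => i ≠ i₀ ∧ digit b j (x i) ∈ A).card < m

lemma card_genF (d b m : ℕ) (hb : 0 < b) (A : Finset ℕ) (hA : A ⊆ Finset.range b)
    (i₀ : Fin d) : ∀ k, (genF d b A m k i₀).card = (genN d b A m * b) ^ k
  | 0 => by
    rw [genF, Finset.filter_true_of_mem (fun x _ => by omega), pow_zero,
      Fintype.card_piFinset]
    simp
  | k + 1 => by
    have ih := card_genF d b m hb A hA i₀ k
    rw [pow_succ, ← ih, ← card_genCol d b m A hA i₀, ← Finset.card_product]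
    apply Finset.card_bij' (fun x _ => ((fun i => x i % b ^ k), (fun i => x i / b ^ k)))
      (fun p _ => fun i => p.1 i + b ^ k * p.2 i)
    · -- hi : image is in the product
      intro x hx
      rw [genF, mem_filter, Fintype.mem_piFinset] at hx
      obtain ⟨hpi, hcnt⟩ := hx
      rw [Finset.mem_product]
      constructor
      · rw [genF, mem_filter, Fintype.mem_piFinset]
        constructor
        · intro i
          exact mem_range.mpr (Nat.mod_lt _ (pow_pos hb k))
        · intro j hj
          have he : (Finset.univ.filter fun i => i ≠ i₀ ∧ digit b j (x i % b ^ k) ∈ A)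
              = Finset.univ.filter fun i => i ≠ i₀ ∧ digit b j (x i) ∈ A := by
            apply filter_congr
            intro i _
            rw [digit_mod_pow hb hj]
          rw [he]
          exact hcnt j (by omega)
      · rw [genCol, mem_filter, Fintype.mem_piFinset]
        have hdiv : ∀ i, x i / b ^ k < b := by
          intro i
          have := mem_range.mp (hpi i)
          rw [pow_succ] at this
          exact Nat.div_lt_of_lt_mul this
        constructor
        · intro i; exact mem_range.mpr (hdiv i)
        · have he : (Finset.univ.filter fun i => i ≠ i₀ ∧ x i / b ^ k ∈ A)
              = Finset.univ.filter fun i => i ≠ i₀ ∧ digit b k (x i) ∈ A := by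
            apply filter_congr
            intro i _
            rw [digit, Nat.mod_eq_of_lt (hdiv i)]
          rw [he]
          exact hcnt k (by omega)
    · -- hj : preimage is in genF (k+1)
      intro p hp
      rw [Finset.mem_product, genF, mem_filter, Fintype.mem_piFinset,
        genCol, mem_filter, Fintype.mem_piFinset] at hp
      obtain ⟨⟨hp1, hc1⟩, hp2, hc2⟩ := hp
      rw [genF, mem_filter, Fintype.mem_piFinset]
      constructor
      · intro i
        have h1 := mem_range.mp (hp1 i)
        have h2 := mem_range.mp (hp2 i)
        have hps : b ^ (k + 1) = b ^ k * b := pow_succ b k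
        exact mem_range.mpr (by nlinarith)
      · intro j hj
        rcases Nat.lt_or_ge j k with hjk | hjk
        · have he : (Finset.univ.filter
              fun i => i ≠ i₀ ∧ digit b j (p.1 i + b ^ k * p.2 i) ∈ A)
              = Finset.univ.filter fun i => i ≠ i₀ ∧ digit b j (p.1 i) ∈ A := by
            apply filter_congr
            intro i _
            rw [digit_add_pow_mul hb hjk]
          rw [he]
          exact hc1 j hjk
        · have hjk' : j = k := by omega
          subst hjk'
          have he : (Finset.univ.filter
              fun i => i ≠ i₀ ∧ digit b j (p.1 i + b ^ j * p.2 i) ∈ A)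
              = Finset.univ.filter fun i => i ≠ i₀ ∧ p.2 i ∈ A := by
            apply filter_congr
            intro i _
            rw [digit_top hb (mem_range.mp (hp1 i)) (mem_range.mp (hp2 i))]
          rw [he]
          exact hc2
    · -- left inverse
      intro x hx
      funext i
      exact Nat.mod_add_div _ _
    · -- right inverse
      intro p hp
      rw [Finset.mem_product, genF, mem_filter, Fintype.mem_piFinset,
        genCol, mem_filter, Fintype.mem_piFinset] at hp
      obtain ⟨⟨hp1, -⟩, hp2, -⟩ := hp
      refine Prod.ext (funext fun i => ?_) (funext fun i => ?_)
      · show (p.1 i + b ^ k * p.2 i) % b ^ k = p.1 i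
        rw [Nat.add_mul_mod_self_left, Nat.mod_eq_of_lt (mem_range.mp (hp1 i))]
      · show (p.1 i + b ^ k * p.2 i) / b ^ k = p.2 i
        rw [Nat.add_mul_div_left _ _ (pow_pos hb k),
          Nat.div_eq_of_lt (mem_range.mp (hp1 i)), zero_add]

lemma genF_subset_genCkV (d b m : ℕ) (A : Finset ℕ) (i₀ : Fin d) (k : ℕ) :
    genF d b A m k i₀ ⊆ GenCkV d b A m k := by
  intro x hx
  rw [genF, mem_filter] at hx
  obtain ⟨hpi, hcnt⟩ := hx
  have hlt : ∀ i, x i < b ^ k := fun i =>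
    mem_range.mp (Fintype.mem_piFinset.mp hpi i)
  have key : ∀ t < b ^ k, GenMem d b A m k (Function.update x i₀ t) := by
    intro t ht
    constructor
    · intro i
      rcases eq_or_ne i i₀ with rfl | h
      · rwa [Function.update_self]
      · rw [Function.update_of_ne h]; exact hlt i
    · intro j hj
      have hsub : (Finset.univ.filter fun i : Fin d =>
          digit b j (Function.update x i₀ t i) ∈ A) ⊆
          insert i₀ (Finset.univ.filter fun i => i ≠ i₀ ∧ digit b j (x i) ∈ A) := by
        intro i hi
        rw [mem_filter] at hi
        rcases eq_or_ne i i₀ with rfl | h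
        · exact mem_insert_self _ _
        · refine mem_insert_of_mem (mem_filter.mpr ⟨mem_univ i, h, ?_⟩)
          have := hi.2
          rwa [Function.update_of_ne h] at this
      have h1 := card_le_card hsub
      have h2 := card_insert_le i₀
        (Finset.univ.filter fun i => i ≠ i₀ ∧ digit b j (x i) ∈ A)
      have h3 := hcnt j hj
      omega
  have hmem : GenMem d b A m k x := by
    have h := key (x i₀) (hlt i₀)
    rwa [Function.update_eq_self] at h
  rw [GenCkV, mem_filter, GenGammaV, mem_filter]
  exact ⟨⟨hpi, hmem⟩, i₀, key⟩

lemma genCkV_subset (d b m : ℕ) (A : Finset ℕ) (hA : A ⊆ Finset.range b)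
    (hm₁ : 1 ≤ m) (k : ℕ) :
    GenCkV d b A m k ⊆ Finset.univ.biUnion fun i₀ => genF d b A m k i₀ := by
  intro x hx
  rw [GenCkV, mem_filter] at hx
  obtain ⟨hx, i₀, hline⟩ := hx
  rw [GenGammaV, mem_filter] at hx
  refine mem_biUnion.mpr ⟨i₀, mem_univ _, ?_⟩
  rw [genF, mem_filter]
  refine ⟨hx.1, ?_⟩
  rcases A.eq_empty_or_nonempty with rfl | ⟨a, haA⟩
  · intro j hj
    simp only [Finset.notMem_empty, and_false, Finset.filter_false, Finset.card_empty]
    omega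
  · have ha : a < b := mem_range.mp (hA haA)
    have ht : allAux a b k < b ^ k := allAux_lt ha k
    have hmem := hline (allAux a b k) ht
    intro j hj
    have hcnt := hmem.2 j hj
    have hi₀mem : i₀ ∈ Finset.univ.filter
        fun i : Fin d => digit b j (Function.update x i₀ (allAux a b k) i) ∈ A := by
      rw [mem_filter, Function.update_self, digit_allAux ha k j hj]
      exact ⟨mem_univ _, haA⟩
    have hsub : (Finset.univ.filter fun i => i ≠ i₀ ∧ digit b j (x i) ∈ A) ⊆
        (Finset.univ.filter fun i : Fin d =>
          digit b j (Function.update x i₀ (allAux a b k) i) ∈ A).erase i₀ := by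
      intro i hi
      rw [mem_filter] at hi
      obtain ⟨-, hii, hia⟩ := hi
      refine mem_erase.mpr ⟨hii, mem_filter.mpr ⟨mem_univ _, ?_⟩⟩
      rwa [Function.update_of_ne hii]
    have h1 := card_le_card hsub
    have h2 := card_erase_of_mem hi₀mem
    have h3 := Finset.card_pos.mpr ⟨i₀, hi₀mem⟩
    omega

end CkAux2

/-- The complete-lines subgraph `C_k` of `Γ_k(d,b,A,m)` satisfies `|C_k| ≍ (N·b)^k`. -/
theorem card_genCkV (d b m : ℕ) (hd : 2 ≤ d) (hb : 3 ≤ b)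
    (A : Finset ℕ) (hA : A ⊆ Finset.range b) (hm₁ : 1 ≤ m) (hm₂ : m ≤ d) :
    ∃ c C : ℝ, 0 < c ∧ 0 < C ∧ ∀ k : ℕ,
      c * ((genN d b A m * b : ℕ) : ℝ) ^ k ≤ ((GenCkV d b A m k).card : ℝ) ∧
      ((GenCkV d b A m k).card : ℝ) ≤ C * ((genN d b A m * b : ℕ) : ℝ) ^ k := by
  classical
  have hb0 : 0 < b := by omega
  refine ⟨1, d, one_pos, by positivity, fun k => ?_⟩
  have i₀ : Fin d := ⟨0, by omega⟩
  constructor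
  · have h := Finset.card_le_card (genF_subset_genCkV d b m A i₀ k)
    rw [card_genF d b m hb0 A hA i₀ k] at h
    rw [one_mul, ← Nat.cast_pow]
    exact_mod_cast h
  · have h := Finset.card_le_card (genCkV_subset d b m A hA hm₁ k)
    have h2 := Finset.card_biUnion_le (s := (Finset.univ : Finset (Fin d)))
      (t := fun i₀ => genF d b A m k i₀)
    have h3 : ∑ i₀ : Fin d, (genF d b A m k i₀).card = d * (genN d b A m * b) ^ k := by
      rw [Finset.sum_congr rfl fun i₀ _ => card_genF d b m hb0 A hA i₀ k,
        Finset.sum_const, Finset.card_univ, Fintype.card_fin, smul_eq_mul]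
    have : (GenCkV d b A m k).card ≤ d * (genN d b A m * b) ^ k := by omega
    rw [← Nat.cast_pow]
    exact_mod_cast this
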